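/- Let X and Y be compact subsets of the real line. There exists an increasing homeomorphism f : ℝ → ℝ with f[X] = Y if and only if there exists an order isomorphism F : 𝓐_X ∪ 𝓑_X → 𝓐_Y ∪ 𝓑_Y such that F[𝓐_X] = 𝓐_Y. -/

import Mathlib

/-- An `X`-interval: a connected component of `X` with more than one point. -/
def IsIntervalOf (X I : Set ℝ) : Prop :=
  (∃ x ∈ X, I = connectedComponentIn X x) ∧ I.Nontrivial

/-- `𝓐_X`: the family of all connected components of `ℝ \ X`
(including the two unbounded ones). -/
def GapsAll (X : Set ℝ) : Set (Set ℝ) :=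
  {G | ∃ x ∈ Xᶜ, G = connectedComponentIn Xᶜ x}

/-- `𝓑_X`: the family of all `X`-intervals. -/
def Ivls (X : Set ℝ) : Set (Set ℝ) := {I | IsIntervalOf X I}

/-- The natural order on families of subsets of `ℝ`: `I < J` iff every point
of `I` is below every point of `J`. -/
def SetLT (I J : Set ℝ) : Prop := ∀ x ∈ I, ∀ y ∈ J, x < y

open Set

noncomputable def hmap : ℝ → ℝ := fun x => (orderIsoIooNegOneOne ℝ x : ℝ)

lemma hmap_strictMono : StrictMono hmap := fun a b hab => by
  exact_mod_cast (orderIsoIooNegOneOne ℝ).lt_iff_lt.2 hab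

lemma hmap_mem (x : ℝ) : hmap x ∈ Ioo (-1:ℝ) 1 := (orderIsoIooNegOneOne ℝ x).2

lemma hmap_surjOn {y : ℝ} (hy : y ∈ Ioo (-1:ℝ) 1) : ∃ x, hmap x = y :=
  ⟨(orderIsoIooNegOneOne ℝ).symm ⟨y, hy⟩, by simp [hmap]⟩

lemma hmap_le_iff {a b : ℝ} : hmap a ≤ hmap b ↔ a ≤ b := hmap_strictMono.le_iff_le

lemma hmap_lt_iff {a b : ℝ} : hmap a < hmap b ↔ a < b := hmap_strictMono.lt_iff_lt

lemma hmap_inj : Function.Injective hmap := hmap_strictMono.injective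

lemma hmap_image_ordConnected {S : Set ℝ} (hS : S.OrdConnected) :
    (hmap '' S).OrdConnected := by
  constructor
  rintro _ ⟨u, hu, rfl⟩ _ ⟨w, hw, rfl⟩ z hz
  have hz1 : z ∈ Ioo (-1:ℝ) 1 :=
    ⟨lt_of_lt_of_le (hmap_mem u).1 hz.1, lt_of_le_of_lt hz.2 (hmap_mem w).2⟩
  obtain ⟨r, rfl⟩ := hmap_surjOn hz1
  exact ⟨r, hS.out hu hw ⟨hmap_le_iff.1 hz.1, hmap_le_iff.1 hz.2⟩, rfl⟩

lemma eq_Ioo_of_shape {S : Set ℝ} (hne : S.Nonempty) (hbb : BddBelow S) (hba : BddAbove S)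
    (hoc : S.OrdConnected) (hmin : ∀ x ∈ S, ∃ y ∈ S, y < x)
    (hmax : ∀ x ∈ S, ∃ y ∈ S, x < y) :
    ∃ A B : ℝ, A < B ∧ S = Ioo A B := by
  refine ⟨sInf S, sSup S, ?_, ?_⟩
  · obtain ⟨x, hx⟩ := hne
    obtain ⟨y, hy, hyx⟩ := hmin x hx
    obtain ⟨w, hw, hxw⟩ := hmax x hx
    exact lt_of_le_of_lt (csInf_le hbb hy) (lt_of_lt_of_le (hyx.trans hxw) (le_csSup hba hw))
  · ext z
    constructor
    · intro hz
      obtain ⟨y, hy, hyz⟩ := hmin z hz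
      obtain ⟨w, hw, hzw⟩ := hmax z hz
      exact ⟨lt_of_le_of_lt (csInf_le hbb hy) hyz, lt_of_lt_of_le hzw (le_csSup hba hw)⟩
    · rintro ⟨h1, h2⟩
      obtain ⟨u, hu, huz⟩ := exists_lt_of_csInf_lt hne h1
      obtain ⟨v, hv, hzv⟩ := exists_lt_of_lt_csSup hne h2
      exact hoc.out hu hv ⟨le_of_lt huz, le_of_lt hzv⟩

lemma gap_open {X G : Set ℝ} (hXcl : IsClosed X) (hG : G ∈ GapsAll X) : IsOpen G := by
  obtain ⟨x, hx, rfl⟩ := hG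
  exact hXcl.isOpen_compl.connectedComponentIn

lemma gap_nonempty {X G : Set ℝ} (hG : G ∈ GapsAll X) : G.Nonempty := by
  obtain ⟨x, hx, rfl⟩ := hG
  exact ⟨x, mem_connectedComponentIn hx⟩

lemma gap_subset {X G : Set ℝ} (hG : G ∈ GapsAll X) : G ⊆ Xᶜ := by
  obtain ⟨x, hx, rfl⟩ := hG
  exact connectedComponentIn_subset _ _

lemma gap_ordConnected {X G : Set ℝ} (hG : G ∈ GapsAll X) : G.OrdConnected := by
  obtain ⟨x, hx, rfl⟩ := hG
  exact isPreconnected_connectedComponentIn.ordConnected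

lemma ivl_eq_Icc {X I : Set ℝ} (hX : IsCompact X) (hI : I ∈ Ivls X) :
    ∃ a b : ℝ, a < b ∧ I = Icc a b := by
  obtain ⟨⟨x, hxX, rfl⟩, hnt⟩ := hI
  set I := connectedComponentIn X x with hIdef
  have hsub : I ⊆ X := connectedComponentIn_subset _ _
  have hbb : BddBelow I := hX.bddBelow.mono hsub
  have hba : BddAbove I := hX.bddAbove.mono hsub
  have hxI : x ∈ I := mem_connectedComponentIn hxX
  have hoc : I.OrdConnected := isPreconnected_connectedComponentIn.ordConnected
  set a := sInf I with ha
  set b := sSup I with hb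
  have hab : a < b := by
    obtain ⟨u, hu, v, hv, huv⟩ := hnt
    rcases lt_or_gt_of_ne huv with h | h
    · exact lt_of_le_of_lt (csInf_le hbb hu) (lt_of_lt_of_le h (le_csSup hba hv))
    · exact lt_of_le_of_lt (csInf_le hbb hv) (lt_of_lt_of_le h (le_csSup hba hu))
  have hIoo : Ioo a b ⊆ I := by
    intro z hz
    obtain ⟨u, hu, huz⟩ := exists_lt_of_csInf_lt ⟨x, hxI⟩ hz.1
    obtain ⟨v, hv, hzv⟩ := exists_lt_of_lt_csSup ⟨x, hxI⟩ hz.2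
    exact hoc.out hu hv ⟨le_of_lt huz, le_of_lt hzv⟩
  have hIccX : Icc a b ⊆ X := by
    rw [← closure_Ioo (ne_of_lt hab)]
    calc closure (Ioo a b) ⊆ closure X := closure_mono (hIoo.trans hsub)
    _ = X := hX.isClosed.closure_eq
  have hxIcc : x ∈ Icc a b := ⟨csInf_le hbb hxI, le_csSup hba hxI⟩
  refine ⟨a, b, hab, Subset.antisymm ?_ ?_⟩
  · exact fun z hz => ⟨csInf_le hbb hz, le_csSup hba hz⟩
  · exact isPreconnected_Icc.subset_connectedComponentIn hxIcc hIccX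

lemma ivl_subset {X I : Set ℝ} (hI : I ∈ Ivls X) : I ⊆ X := by
  obtain ⟨⟨x, hxX, rfl⟩, _⟩ := hI
  exact connectedComponentIn_subset _ _

lemma ivl_nonempty {X I : Set ℝ} (hI : I ∈ Ivls X) : I.Nonempty := hI.2.nonempty

lemma family_ordConnected {X I : Set ℝ} (hX : IsCompact X) (hI : I ∈ GapsAll X ∪ Ivls X) :
    I.OrdConnected := by
  rcases hI with hg | hv
  · exact gap_ordConnected hg
  · obtain ⟨a, b, hab, rfl⟩ := ivl_eq_Icc hX hv
    exact ordConnected_Icc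

lemma family_nonempty {X I : Set ℝ} (hI : I ∈ GapsAll X ∪ Ivls X) : I.Nonempty := by
  rcases hI with hg | hv
  · exact gap_nonempty hg
  · exact ivl_nonempty hv

lemma family_disjoint {X I J : Set ℝ} (hI : I ∈ GapsAll X ∪ Ivls X)
    (hJ : J ∈ GapsAll X ∪ Ivls X) (hne : I ≠ J) : Disjoint I J := by
  rw [Set.disjoint_left]
  intro z hzI hzJ
  apply hne
  rcases hI with hg | hv
  · rcases hJ with hg' | hv'
    · obtain ⟨x, hx, rfl⟩ := hg
      obtain ⟨y, hy, rfl⟩ := hg'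
      rw [connectedComponentIn_eq hzI, connectedComponentIn_eq hzJ]
    · exact absurd (ivl_subset hv' hzJ) (gap_subset hg hzI)
  · rcases hJ with hg' | hv'
    · exact absurd (ivl_subset hv hzI) (gap_subset hg' hzJ)
    · obtain ⟨⟨x, hx, rfl⟩, _⟩ := hv
      obtain ⟨⟨y, hy, rfl⟩, _⟩ := hv'
      rw [connectedComponentIn_eq hzI, connectedComponentIn_eq hzJ]

lemma setLT_trichotomy {I J : Set ℝ} (hI : I.OrdConnected) (hJ : J.OrdConnected)
    (hd : Disjoint I J) : SetLT I J ∨ SetLT J I := by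
  by_contra hc
  push_neg at hc
  obtain ⟨h1, h2⟩ := hc
  simp only [SetLT, not_forall] at h1 h2
  obtain ⟨x, hx, y, hy, hxy⟩ := h1
  obtain ⟨y', hy', x', hx', hyx'⟩ := h2
  push_neg at hxy hyx'
  have hyx : y < x := lt_of_le_of_ne hxy (fun h => (Set.disjoint_left.1 hd hx) (h ▸ hy))
  have hx'y' : x' < y' := lt_of_le_of_ne hyx' (fun h => (Set.disjoint_left.1 hd hx') (h.symm ▸ hy'))
  rcases le_or_gt x' y with h | h
  · exact (Set.disjoint_left.1 hd (hI.out hx' hx ⟨h, le_of_lt hyx⟩)) hy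
  · exact (Set.disjoint_left.1 hd hx') (hJ.out hy hy' ⟨le_of_lt h, le_of_lt hx'y'⟩)

lemma gap_shape {X G : Set ℝ} (hXcl : IsClosed X) (hG : G ∈ GapsAll X) :
    ∃ A B : ℝ, A < B ∧ hmap '' G = Ioo A B := by
  have hop := gap_open hXcl hG
  have hoc := gap_ordConnected hG
  have hne := gap_nonempty hG
  have key : ∀ x ∈ G, (∃ y ∈ G, y < x) ∧ (∃ y ∈ G, x < y) := by
    intro x hx
    obtain ⟨ε, hε, hball⟩ := Metric.isOpen_iff.1 hop x hx
    rw [Real.ball_eq_Ioo] at hball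
    exact ⟨⟨x - ε/2, hball ⟨by linarith, by linarith⟩, by linarith⟩,
      ⟨x + ε/2, hball ⟨by linarith, by linarith⟩, by linarith⟩⟩
  apply eq_Ioo_of_shape (hne.image _)
  · exact ⟨-1, by rintro _ ⟨z, _, rfl⟩; exact le_of_lt (hmap_mem z).1⟩
  · exact ⟨1, by rintro _ ⟨z, _, rfl⟩; exact le_of_lt (hmap_mem z).2⟩
  · exact hmap_image_ordConnected hoc
  · rintro _ ⟨z, hz, rfl⟩
    obtain ⟨⟨y, hy, hyz⟩, -⟩ := key z hz
    exact ⟨hmap y, ⟨y, hy, rfl⟩, hmap_lt_iff.2 hyz⟩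
  · rintro _ ⟨z, hz, rfl⟩
    obtain ⟨-, ⟨y, hy, hzy⟩⟩ := key z hz
    exact ⟨hmap y, ⟨y, hy, rfl⟩, hmap_lt_iff.2 hzy⟩

lemma hmap_image_Icc (a b : ℝ) (hab : a ≤ b) :
    hmap '' Icc a b = Icc (hmap a) (hmap b) := by
  apply Subset.antisymm
  · rintro _ ⟨z, hz, rfl⟩
    exact ⟨hmap_le_iff.2 hz.1, hmap_le_iff.2 hz.2⟩
  · rintro z ⟨h1, h2⟩
    have hz1 : z ∈ Ioo (-1:ℝ) 1 :=
      ⟨lt_of_lt_of_le (hmap_mem a).1 h1, lt_of_le_of_lt h2 (hmap_mem b).2⟩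
    obtain ⟨r, rfl⟩ := hmap_surjOn hz1
    exact ⟨r, ⟨hmap_le_iff.1 h1, hmap_le_iff.1 h2⟩, rfl⟩

lemma family_data {X : Set ℝ} (hX : IsCompact X) (I : Set ℝ) (hI : I ∈ GapsAll X ∪ Ivls X) :
    ∃ A B : ℝ, A < B ∧
      ((I ∈ GapsAll X ∧ hmap '' I = Ioo A B) ∨ (I ∉ GapsAll X ∧ hmap '' I = Icc A B)) := by
  by_cases hg : I ∈ GapsAll X
  · obtain ⟨A, B, hAB, hsh⟩ := gap_shape hX.isClosed hg
    exact ⟨A, B, hAB, Or.inl ⟨hg, hsh⟩⟩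
  · have hv : I ∈ Ivls X := hI.resolve_left hg
    obtain ⟨a, b, hab, rfl⟩ := ivl_eq_Icc hX hv
    exact ⟨hmap a, hmap b, hmap_lt_iff.2 hab, Or.inr ⟨hg, hmap_image_Icc a b (le_of_lt hab)⟩⟩

lemma compl_subset_sUnion {X : Set ℝ} : Xᶜ ⊆ {x : ℝ | ∃ I ∈ GapsAll X ∪ Ivls X, x ∈ I} := by
  intro x hx
  exact ⟨connectedComponentIn Xᶜ x, Or.inl ⟨x, hx, rfl⟩, mem_connectedComponentIn hx⟩

lemma dense_between {X : Set ℝ} (u v : ℝ) (huv : u < v) :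
    ∃ z, (∃ I ∈ GapsAll X ∪ Ivls X, z ∈ I) ∧ u < z ∧ z < v := by
  by_cases hc : (Ioo u v ∩ Xᶜ).Nonempty
  · obtain ⟨z, hz1, hz2⟩ := hc
    exact ⟨z, compl_subset_sUnion hz2, hz1.1, hz1.2⟩
  · have hsub : Ioo u v ⊆ X := by
      intro z hz
      by_contra hzX
      exact hc ⟨z, hz, hzX⟩
    set m := (u + v) / 2 with hm
    have hmuv : m ∈ Ioo u v := ⟨by simp [hm]; linarith, by simp [hm]; linarith⟩
    have hmX : m ∈ X := hsub hmuv
    have hIoo : Ioo u v ⊆ connectedComponentIn X m :=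
      isPreconnected_Ioo.subset_connectedComponentIn hmuv hsub
    have hnt : (connectedComponentIn X m).Nontrivial := by
      refine ⟨(u + m)/2, hIoo ⟨by linarith [hmuv.1], by linarith [hmuv.2]⟩, m,
        mem_connectedComponentIn hmX, by linarith [hmuv.1]⟩
    exact ⟨m, ⟨connectedComponentIn X m, Or.inr ⟨⟨m, hmX, rfl⟩, hnt⟩,
      mem_connectedComponentIn hmX⟩, hmuv.1, hmuv.2⟩

lemma unbdd_above {X : Set ℝ} (hX : IsCompact X) (x : ℝ) :
    ∃ z, (∃ I ∈ GapsAll X ∪ Ivls X, z ∈ I) ∧ x < z := by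
  obtain ⟨M, hM⟩ := hX.bddAbove
  refine ⟨max x M + 1, compl_subset_sUnion (fun hmem => ?_), by have := le_max_left x M; linarith⟩
  have := hM hmem
  have h2 : max x M + 1 ≤ M := this
  have := le_max_right x M
  linarith

lemma unbdd_below {X : Set ℝ} (hX : IsCompact X) (x : ℝ) :
    ∃ z, (∃ I ∈ GapsAll X ∪ Ivls X, z ∈ I) ∧ z < x := by
  obtain ⟨M, hM⟩ := hX.bddBelow
  refine ⟨min x M - 1, compl_subset_sUnion (fun hmem => ?_), by have := min_le_left x M; linarith⟩
  have h2 : M ≤ min x M - 1 := hM hmem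
  have := min_le_right x M
  linarith

lemma affine_maps {a b c d : ℝ} (hab : a < b) (hcd : c < d) :
    StrictMono (fun t => c + (t - a) * ((d - c) / (b - a))) ∧
    (fun t => c + (t - a) * ((d - c) / (b - a))) '' Ioo a b = Ioo c d ∧
    (fun t => c + (t - a) * ((d - c) / (b - a))) '' Icc a b = Icc c d := by
  have hba : (0:ℝ) < b - a := by linarith
  have hdc : (0:ℝ) < d - c := by linarith
  have hr : (0:ℝ) < (d - c) / (b - a) := div_pos hdc hba
  have hsm : StrictMono (fun t => c + (t - a) * ((d - c) / (b - a))) := by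
    intro s t hst
    have := mul_lt_mul_of_pos_right (sub_lt_sub_right hst a) hr
    dsimp only
    linarith
  have hmono := hsm.monotone
  have hfa : c + (a - a) * ((d - c) / (b - a)) = c := by ring
  have hfb : c + (b - a) * ((d - c) / (b - a)) = d := by
    field_simp
    ring
  have hkey : ∀ s : ℝ, ∃ t, c + (t - a) * ((d - c) / (b - a)) = s ∧
      (c < s → a < t) ∧ (s < d → t < b) ∧ (c ≤ s → a ≤ t) ∧ (s ≤ d → t ≤ b) := by
    intro s
    refine ⟨a + (s - c) * ((b - a) / (d - c)), ?_, ?_, ?_, ?_, ?_⟩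
    · field_simp
      ring
    · intro h
      have : (0:ℝ) < (s - c) * ((b - a) / (d - c)) :=
        mul_pos (by linarith) (div_pos hba hdc)
      linarith
    · intro h
      have h1 : (s - c) * ((b - a) / (d - c)) < (d - c) * ((b - a) / (d - c)) :=
        mul_lt_mul_of_pos_right (by linarith) (div_pos hba hdc)
      have h2 : (d - c) * ((b - a) / (d - c)) = b - a := by field_simp
      linarith
    · intro h
      have : (0:ℝ) ≤ (s - c) * ((b - a) / (d - c)) :=
        mul_nonneg (by linarith) (le_of_lt (div_pos hba hdc))
      linarith
    · intro h
      have h1 : (s - c) * ((b - a) / (d - c)) ≤ (d - c) * ((b - a) / (d - c)) :=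
        mul_le_mul_of_nonneg_right (by linarith) (le_of_lt (div_pos hba hdc))
      have h2 : (d - c) * ((b - a) / (d - c)) = b - a := by field_simp
      linarith
  refine ⟨hsm, ?_, ?_⟩
  · apply Subset.antisymm
    · rintro _ ⟨t, ht, rfl⟩
      constructor
      · have := hsm ht.1; dsimp only at this ⊢; linarith [hfa]
      · have := hsm ht.2; dsimp only at this ⊢; linarith [hfb]
    · intro s hs
      obtain ⟨t, heq, h1, h2, -, -⟩ := hkey s
      exact ⟨t, ⟨h1 hs.1, h2 hs.2⟩, heq⟩
  · apply Subset.antisymm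
    · rintro _ ⟨t, ht, rfl⟩
      constructor
      · have := hmono ht.1; dsimp only at this ⊢; linarith [hfa]
      · have := hmono ht.2; dsimp only at this ⊢; linarith [hfb]
    · intro s hs
      obtain ⟨t, heq, -, -, h1, h2⟩ := hkey s
      exact ⟨t, ⟨h1 hs.1, h2 hs.2⟩, heq⟩

noncomputable def hinv : ℝ → ℝ := fun y =>
  if hy : y ∈ Ioo (-1:ℝ) 1 then Classical.choose (hmap_surjOn hy) else 0

lemma hinv_hmap (x : ℝ) : hinv (hmap x) = x := by
  rw [hinv, dif_pos (hmap_mem x)]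
  exact hmap_inj (Classical.choose_spec (hmap_surjOn (hmap_mem x)))

theorem backward_dir (X Y : Set ℝ) (hX : IsCompact X) (hY : IsCompact Y)
    (F : ↥(GapsAll X ∪ Ivls X) → ↥(GapsAll Y ∪ Ivls Y))
    (hFbij : Function.Bijective F)
    (hFlt : ∀ I J : ↥(GapsAll X ∪ Ivls X), SetLT I.val J.val ↔ SetLT (F I).val (F J).val)
    (hFim : F '' {I : ↥(GapsAll X ∪ Ivls X) | I.val ∈ GapsAll X} =
      {J : ↥(GapsAll Y ∪ Ivls Y) | J.val ∈ GapsAll Y}) :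
    ∃ f : ℝ ≃ₜ ℝ, StrictMono f ∧ f '' X = Y := by
  classical
  choose AX BX hABX hdX using fun I : ↥(GapsAll X ∪ Ivls X) => family_data hX I.val I.2
  choose AY BY hABY hdY using fun J : ↥(GapsAll Y ∪ Ivls Y) => family_data hY J.val J.2
  -- gap transfer
  have hgapF : ∀ I, I.val ∈ GapsAll X → (F I).val ∈ GapsAll Y := by
    intro I hI
    have : F I ∈ F '' {I : ↥(GapsAll X ∪ Ivls X) | I.val ∈ GapsAll X} := ⟨I, hI, rfl⟩
    rw [hFim] at this
    exact this
  have hgapF' : ∀ I, (F I).val ∈ GapsAll Y → I.val ∈ GapsAll X := by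
    intro I hFI
    have : F I ∈ F '' {I : ↥(GapsAll X ∪ Ivls X) | I.val ∈ GapsAll X} := by
      rw [hFim]; exact hFI
    obtain ⟨I', hI', hII⟩ := this
    rwa [← hFbij.1 hII]
  -- matched shapes
  have hmatch : ∀ I, (hmap '' I.val = Ioo (AX I) (BX I) ∧
        hmap '' (F I).val = Ioo (AY (F I)) (BY (F I))) ∨
      (hmap '' I.val = Icc (AX I) (BX I) ∧
        hmap '' (F I).val = Icc (AY (F I)) (BY (F I))) := by
    intro I
    rcases hdX I with ⟨hg, hsh⟩ | ⟨hg, hsh⟩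
    · rcases hdY (F I) with ⟨-, hsh'⟩ | ⟨hg', -⟩
      · exact Or.inl ⟨hsh, hsh'⟩
      · exact absurd (hgapF I hg) hg'
    · rcases hdY (F I) with ⟨hg', -⟩ | ⟨-, hsh'⟩
      · exact absurd (hgapF' I hg') hg
      · exact Or.inr ⟨hsh, hsh'⟩
  set ψ : ↥(GapsAll X ∪ Ivls X) → ℝ → ℝ :=
    fun I t => AY (F I) + (t - AX I) * ((BY (F I) - AY (F I)) / (BX I - AX I)) with hψdef
  have hψmono : ∀ I, StrictMono (ψ I) := fun I => (affine_maps (hABX I) (hABY (F I))).1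
  have hψim : ∀ I, ψ I '' (hmap '' I.val) = hmap '' (F I).val := by
    intro I
    rcases hmatch I with ⟨h1, h2⟩ | ⟨h1, h2⟩
    · rw [h1, h2]; exact (affine_maps (hABX I) (hABY (F I))).2.1
    · rw [h1, h2]; exact (affine_maps (hABX I) (hABY (F I))).2.2
  -- uniqueness of component
  have huniq : ∀ (I J : ↥(GapsAll X ∪ Ivls X)) (x : ℝ), x ∈ I.val → x ∈ J.val → I = J := by
    intro I J x hxI hxJ
    by_contra hne
    exact Set.disjoint_left.1
      (family_disjoint I.2 J.2 (fun h => hne (Subtype.ext h))) hxI hxJ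
  set f₀ : ℝ → ℝ := fun x =>
    if hx : ∃ I : ↥(GapsAll X ∪ Ivls X), x ∈ I.val
    then hinv (ψ (Classical.choose hx) (hmap x)) else x with hf₀def
  have hf₀ : ∀ (I : ↥(GapsAll X ∪ Ivls X)), ∀ x ∈ I.val,
      f₀ x ∈ (F I).val ∧ hmap (f₀ x) = ψ I (hmap x) := by
    intro I x hx
    have hex : ∃ J : ↥(GapsAll X ∪ Ivls X), x ∈ J.val := ⟨I, hx⟩
    have hIeq : Classical.choose hex = I := huniq _ _ x (Classical.choose_spec hex) hx
    have hψx : ψ I (hmap x) ∈ hmap '' (F I).val := by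
      rw [← hψim I]
      exact ⟨hmap x, ⟨x, hx, rfl⟩, rfl⟩
    obtain ⟨w, hw, hweq⟩ := hψx
    have heq : f₀ x = w := by
      simp only [hf₀def, dif_pos hex, hIeq, ← hweq, hinv_hmap]
    rw [heq, hweq]
    exact ⟨hw, rfl⟩
  have hf₀im : ∀ I, f₀ '' I.val = (F I).val := by
    intro I
    apply Subset.antisymm
    · rintro _ ⟨x, hx, rfl⟩
      exact (hf₀ I x hx).1
    · intro w hw
      have hmw : hmap w ∈ ψ I '' (hmap '' I.val) := by
        rw [hψim I]
        exact ⟨w, hw, rfl⟩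
      obtain ⟨_, ⟨x, hx, rfl⟩, heq⟩ := hmw
      exact ⟨x, hx, hmap_inj (by rw [(hf₀ I x hx).2, heq])⟩
  have hf₀mono : ∀ x y, (∃ I : ↥(GapsAll X ∪ Ivls X), x ∈ I.val) →
      (∃ J : ↥(GapsAll X ∪ Ivls X), y ∈ J.val) → x < y → f₀ x < f₀ y := by
    rintro x y ⟨I, hxI⟩ ⟨J, hyJ⟩ hxy
    by_cases hIJ : I = J
    · subst hIJ
      have h1 := (hf₀ I x hxI).2
      have h2 := (hf₀ I y hyJ).2
      have := hψmono I (hmap_lt_iff.2 hxy)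
      rw [← h1, ← h2] at this
      exact hmap_lt_iff.1 this
    · have hd := family_disjoint I.2 J.2 (fun h => hIJ (Subtype.ext h))
      rcases setLT_trichotomy (family_ordConnected hX I.2) (family_ordConnected hX J.2) hd
        with hlt | hlt
      · exact (hFlt I J).1 hlt (f₀ x) (hf₀ I x hxI).1 (f₀ y) (hf₀ J y hyJ).1
      · exact absurd (hlt y hyJ x hxI) (not_lt.2 (le_of_lt hxy))
  have hf₀le : ∀ x y, (∃ I : ↥(GapsAll X ∪ Ivls X), x ∈ I.val) →
      (∃ J : ↥(GapsAll X ∪ Ivls X), y ∈ J.val) → x ≤ y → f₀ x ≤ f₀ y := by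
    intro x y hx hy hxy
    rcases eq_or_lt_of_le hxy with rfl | h
    · exact le_refl _
    · exact le_of_lt (hf₀mono x y hx hy h)
  have toSubX : ∀ {z : ℝ}, (∃ I ∈ GapsAll X ∪ Ivls X, z ∈ I) →
      ∃ I : ↥(GapsAll X ∪ Ivls X), z ∈ I.val :=
    fun h => ⟨⟨h.choose, h.choose_spec.1⟩, h.choose_spec.2⟩
  have toSubY : ∀ {z : ℝ}, (∃ J ∈ GapsAll Y ∪ Ivls Y, z ∈ J) →
      ∃ J : ↥(GapsAll Y ∪ Ivls Y), z ∈ J.val :=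
    fun h => ⟨⟨h.choose, h.choose_spec.1⟩, h.choose_spec.2⟩
  -- surjectivity helper
  have hDY : ∀ w : ℝ, (∃ J : ↥(GapsAll Y ∪ Ivls Y), w ∈ J.val) →
      ∃ d, (∃ I : ↥(GapsAll X ∪ Ivls X), d ∈ I.val) ∧ f₀ d = w := by
    rintro w ⟨J, hwJ⟩
    obtain ⟨I, rfl⟩ := hFbij.2 J
    have : w ∈ f₀ '' I.val := by rw [hf₀im I]; exact hwJ
    obtain ⟨d, hd, rfl⟩ := this
    exact ⟨d, ⟨I, hd⟩, rfl⟩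
  set g : ℝ → ℝ := fun x =>
    sSup (f₀ '' {z | (∃ I : ↥(GapsAll X ∪ Ivls X), z ∈ I.val) ∧ z ≤ x}) with hgdef
  have hPne : ∀ x : ℝ,
      (f₀ '' {z | (∃ I : ↥(GapsAll X ∪ Ivls X), z ∈ I.val) ∧ z ≤ x}).Nonempty := by
    intro x
    obtain ⟨z, hzD, hzx⟩ := unbdd_below hX x
    exact ⟨f₀ z, ⟨z, ⟨toSubX hzD, le_of_lt hzx⟩, rfl⟩⟩
  have hPbdd : ∀ x : ℝ,
      BddAbove (f₀ '' {z | (∃ I : ↥(GapsAll X ∪ Ivls X), z ∈ I.val) ∧ z ≤ x}) := by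
    intro x
    obtain ⟨z, hzD, hxz⟩ := unbdd_above hX x
    refine ⟨f₀ z, ?_⟩
    rintro _ ⟨q, ⟨hqD, hqx⟩, rfl⟩
    exact le_of_lt (hf₀mono q z hqD (toSubX hzD) (lt_of_le_of_lt hqx hxz))
  have hgD : ∀ x : ℝ, (∃ I : ↥(GapsAll X ∪ Ivls X), x ∈ I.val) → g x = f₀ x := by
    intro x hx
    apply le_antisymm
    · apply csSup_le (hPne x)
      rintro _ ⟨q, ⟨hqD, hqx⟩, rfl⟩
      exact hf₀le q x hqD hx hqx
    · exact le_csSup (hPbdd x) ⟨x, ⟨hx, le_refl x⟩, rfl⟩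
  have hgmono : StrictMono g := by
    intro x y hxy
    obtain ⟨d, hdD, hd1, hd2⟩ := dense_between x y hxy
    obtain ⟨d', hd'D, hd'1, hd'2⟩ := dense_between d y hd2
    have h1 : g x ≤ f₀ d := by
      apply csSup_le (hPne x)
      rintro _ ⟨q, ⟨hqD, hqx⟩, rfl⟩
      exact le_of_lt (hf₀mono q d hqD (toSubX hdD) (lt_of_le_of_lt hqx hd1))
    have h2 : f₀ d < f₀ d' := hf₀mono d d' (toSubX hdD) (toSubX hd'D) hd'1
    have h3 : f₀ d' ≤ g y := le_csSup (hPbdd y) ⟨d', ⟨toSubX hd'D, le_of_lt hd'2⟩, rfl⟩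
    linarith
  have hgsurj : Function.Surjective g := by
    intro w
    set T : Set ℝ := {d | (∃ I : ↥(GapsAll X ∪ Ivls X), d ∈ I.val) ∧ f₀ d ≤ w} with hTdef
    have hTne : T.Nonempty := by
      obtain ⟨w', hw'D, hw'w⟩ := unbdd_below hY w
      obtain ⟨d, hdD, hdeq⟩ := hDY w' (toSubY hw'D)
      exact ⟨d, hdD, by rw [hdeq]; exact le_of_lt hw'w⟩
    have hTbdd : BddAbove T := by
      obtain ⟨w'', hw''D, hww''⟩ := unbdd_above hY w
      obtain ⟨d'', hd''D, hd''eq⟩ := hDY w'' (toSubY hw''D)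
      refine ⟨d'', ?_⟩
      rintro e ⟨heD, hew⟩
      by_contra h
      push_neg at h
      have := hf₀mono d'' e hd''D heD h
      rw [hd''eq] at this
      linarith
    refine ⟨sSup T, le_antisymm ?_ ?_⟩
    · apply csSup_le (hPne _)
      rintro _ ⟨q, ⟨hqD, hqx⟩, rfl⟩
      by_contra hgt
      push_neg at hgt
      have hub : ∀ d ∈ T, d ≤ q := by
        rintro d ⟨hdD, hdw⟩
        by_contra h
        push_neg at h
        have := hf₀mono q d hqD hdD h
        linarith
      obtain ⟨w', hw'D, hw1, hw2⟩ := dense_between w (f₀ q) hgt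
      obtain ⟨d', hd'D, hd'eq⟩ := hDY w' (toSubY hw'D)
      have hd'q : d' < q := by
        by_contra h
        push_neg at h
        have := hf₀le q d' hqD hd'D h
        rw [hd'eq] at this
        linarith
      have hd'T : d' < sSup T := lt_of_lt_of_le hd'q hqx
      obtain ⟨e, heT, hde⟩ := exists_lt_of_lt_csSup hTne hd'T
      have := hf₀mono d' e hd'D heT.1 hde
      rw [hd'eq] at this
      linarith [heT.2]
    · by_contra h
      push_neg at h
      obtain ⟨w', hw'D, hw1, hw2⟩ := dense_between (g (sSup T)) w h
      obtain ⟨d, hdD, hdeq⟩ := hDY w' (toSubY hw'D)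
      have hdT : d ∈ T := ⟨hdD, by rw [hdeq]; exact le_of_lt hw2⟩
      have hdle : d ≤ sSup T := le_csSup hTbdd hdT
      have : f₀ d ≤ g (sSup T) := le_csSup (hPbdd _) ⟨d, ⟨hdD, hdle⟩, rfl⟩
      rw [hdeq] at this
      linarith
  -- assemble homeomorphism
  have hgbij : Function.Bijective g := ⟨hgmono.injective, hgsurj⟩
  set e : ℝ ≃o ℝ := StrictMono.orderIsoOfSurjective g hgmono hgsurj with hedef
  have hcoe : ⇑(e.toHomeomorph) = g := rfl
  refine ⟨e.toHomeomorph, by rw [hcoe]; exact hgmono, ?_⟩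
  rw [hcoe]
  -- g '' Xᶜ = Yᶜ
  have hcompl : g '' Xᶜ = Yᶜ := by
    apply Subset.antisymm
    · rintro _ ⟨x, hx, rfl⟩
      set I : ↥(GapsAll X ∪ Ivls X) :=
        ⟨connectedComponentIn Xᶜ x, Or.inl ⟨x, hx, rfl⟩⟩ with hIdef
      have hxI : x ∈ I.val := mem_connectedComponentIn hx
      rw [hgD x ⟨I, hxI⟩]
      exact gap_subset (hgapF I ⟨x, hx, rfl⟩) (hf₀ I x hxI).1
    · intro w hw
      set J : ↥(GapsAll Y ∪ Ivls Y) :=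
        ⟨connectedComponentIn Yᶜ w, Or.inl ⟨w, hw, rfl⟩⟩ with hJdef
      have hwJ : w ∈ J.val := mem_connectedComponentIn hw
      obtain ⟨I, hFI⟩ := hFbij.2 J
      have hIgap : I.val ∈ GapsAll X := hgapF' I (by rw [hFI]; exact ⟨w, hw, rfl⟩)
      have : w ∈ f₀ '' I.val := by rw [hf₀im I, hFI]; exact hwJ
      obtain ⟨x, hxI, rfl⟩ := this
      exact ⟨x, gap_subset hIgap hxI, (hgD x ⟨I, hxI⟩)⟩
  have := image_compl_eq (f := g) (s := X) hgbij
  rw [hcompl] at this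
  exact compl_injective this.symm

lemma image_gap {X Y : Set ℝ} (f : ℝ ≃ₜ ℝ) (hfX : f '' X = Y) {G : Set ℝ}
    (hG : G ∈ GapsAll X) : f '' G ∈ GapsAll Y := by
  obtain ⟨x, hx, rfl⟩ := hG
  have hc : f '' Xᶜ = Yᶜ := by rw [image_compl_eq f.bijective, hfX]
  have hfx : f x ∈ Yᶜ := by rw [← hc]; exact mem_image_of_mem f hx
  refine ⟨f x, hfx, ?_⟩
  rw [Homeomorph.image_connectedComponentIn f hx, hc]

lemma image_ivl {X Y : Set ℝ} (f : ℝ ≃ₜ ℝ) (hfX : f '' X = Y) {I : Set ℝ}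
    (hI : I ∈ Ivls X) : f '' I ∈ Ivls Y := by
  obtain ⟨⟨x, hx, rfl⟩, hnt⟩ := hI
  have hfx : f x ∈ Y := by rw [← hfX]; exact mem_image_of_mem f hx
  refine ⟨⟨f x, hfx, ?_⟩, ?_⟩
  · rw [Homeomorph.image_connectedComponentIn f hx, hfX]
  · obtain ⟨u, hu, v, hv, huv⟩ := hnt
    exact ⟨f u, mem_image_of_mem f hu, f v, mem_image_of_mem f hv,
      fun h => huv (f.injective h)⟩

lemma image_mem_family {X Y : Set ℝ} (f : ℝ ≃ₜ ℝ) (hfX : f '' X = Y) {I : Set ℝ}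
    (hI : I ∈ GapsAll X ∪ Ivls X) : f '' I ∈ GapsAll Y ∪ Ivls Y := by
  rcases hI with h | h
  · exact Or.inl (image_gap f hfX h)
  · exact Or.inr (image_ivl f hfX h)

theorem forward_dir (X Y : Set ℝ) (f : ℝ ≃ₜ ℝ) (hf : StrictMono f) (hfX : f '' X = Y) :
    ∃ F : ↥(GapsAll X ∪ Ivls X) → ↥(GapsAll Y ∪ Ivls Y),
      Function.Bijective F ∧
      (∀ I J : ↥(GapsAll X ∪ Ivls X), SetLT I.val J.val ↔ SetLT (F I).val (F J).val) ∧
      F '' {I : ↥(GapsAll X ∪ Ivls X) | I.val ∈ GapsAll X} =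
        {J : ↥(GapsAll Y ∪ Ivls Y) | J.val ∈ GapsAll Y} := by
  have hfsymm : f.symm '' Y = X := by
    rw [← hfX, ← Set.image_comp]
    simp
  refine ⟨fun I => ⟨f '' I.val, image_mem_family f hfX I.2⟩, ?_, ?_, ?_⟩
  · rw [Function.bijective_iff_has_inverse]
    refine ⟨fun J => ⟨f.symm '' J.val, image_mem_family f.symm hfsymm J.2⟩, ?_, ?_⟩
    · intro I
      apply Subtype.ext
      show f.symm '' (f '' I.val) = I.val
      rw [← Set.image_comp]
      simp
    · intro J
      apply Subtype.ext
      show f '' (f.symm '' J.val) = J.val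
      rw [← Set.image_comp]
      simp
  · intro I J
    constructor
    · rintro h _ ⟨x, hx, rfl⟩ _ ⟨y, hy, rfl⟩
      exact hf (h x hx y hy)
    · intro h x hx y hy
      exact hf.lt_iff_lt.1 (h (f x) (mem_image_of_mem f hx) (f y) (mem_image_of_mem f hy))
  · apply Subset.antisymm
    · rintro _ ⟨I, hI, rfl⟩
      exact image_gap f hfX hI
    · intro J hJ
      refine ⟨⟨f.symm '' J.val, image_mem_family f.symm hfsymm J.2⟩,
        image_gap f.symm hfsymm hJ, ?_⟩
      apply Subtype.ext
      show f '' (f.symm '' J.val) = J.val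
      rw [← Set.image_comp]
      simp


/-- There is an increasing autohomeomorphism of `ℝ` carrying the compact set `X`
onto the compact set `Y` iff there is an order isomorphism
`F : 𝓐_X ∪ 𝓑_X → 𝓐_Y ∪ 𝓑_Y` with `F[𝓐_X] = 𝓐_Y`. -/
theorem increasing_homeo_iff_order_iso (X Y : Set ℝ)
    (hX : IsCompact X) (hY : IsCompact Y) :
    (∃ f : ℝ ≃ₜ ℝ, StrictMono f ∧ f '' X = Y) ↔
    (∃ F : ↥(GapsAll X ∪ Ivls X) → ↥(GapsAll Y ∪ Ivls Y),
      Function.Bijective F ∧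
      (∀ I J : ↥(GapsAll X ∪ Ivls X), SetLT I.val J.val ↔ SetLT (F I).val (F J).val) ∧
      F '' {I : ↥(GapsAll X ∪ Ivls X) | I.val ∈ GapsAll X} =
        {J : ↥(GapsAll Y ∪ Ivls Y) | J.val ∈ GapsAll Y}) := by
  constructor
  · rintro ⟨f, hf, hfX⟩
    exact forward_dir X Y f hf hfX
  · rintro ⟨F, hFbij, hFlt, hFim⟩
    exact backward_dir X Y hX hY F hFbij hFlt hFim
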